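/- In a finite distributive lattice of regular edge labelings (equivalently, equivalence classes of rectangular layouts with a fixed extended dual graph) ordered by flip moves, for each flippable item x and each layout L, the number of times x is flipped counterclockwise is the same along every path in the flip graph from the minimal element to L; i.e., the flipping number f_x(L) is well-defined. -/

import Mathlib

/-- `l` is the sequence of labels of the cover-chain `c` in a lattice: the `k`-th label is a
join-irreducible element witnessing the `k`-th cover step of `c` (it is below the upper
element of the step but not below the lower one).  In the lattice of regular edge labelings,
the cover steps are the flip moves, and such a label `(x, i)` records which flippable item
`x` is flipped (for the `i`-th time) at this step. -/
def LabelsOf {D : Type} [Lattice D] (c l : List D) : Prop :=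
  l.length + 1 = c.length ∧
  ∀ k : ℕ, k + 1 < c.length →
    ∃ p a b : D, l[k]? = some p ∧ (c)[k]? = some a ∧ (c)[k + 1]? = some b ∧
      SupIrred p ∧ p ≤ b ∧ ¬ p ≤ a

/-- `c` is a maximal chain from `⊥` to `L`: a list starting at `⊥`, ending at `L`, each
element covered by the next (i.e. a path of flip moves from the minimal element to `L`). -/
def IsCoverChain {D : Type} [Lattice D] [OrderBot D] (L : D) (c : List D) : Prop :=
  c.head? = some ⊥ ∧ c.getLast? = some L ∧ c.Chain' (· ⋖ ·)

/-- In a distributive lattice, the join-irreducible label of a cover step is unique. -/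
theorem label_unique' {D : Type} [DistribLattice D] {a b p q : D}
    (hab : a ⋖ b) (hp : SupIrred p) (hpb : p ≤ b) (hpa : ¬ p ≤ a)
    (hq : SupIrred q) (hqb : q ≤ b) (hqa : ¬ q ≤ a) : p = q := by
  have key : ∀ p q : D, SupIrred p → p ≤ b → ¬ p ≤ a → q ≤ b → ¬ q ≤ a → p ≤ q := by
    intro p q hp hpb hpa hqb hqa
    have h1 : a < a ⊔ q := left_lt_sup.2 hqa
    have h2 : a ⊔ q = b := by
      rcases (sup_le hab.1.le hqb).lt_or_eq with h | h
      · exact absurd h (hab.2 h1)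
      · exact h
    have h3 : p ⊓ (a ⊔ q) = p := inf_eq_left.2 (h2 ▸ hpb)
    rw [inf_sup_left] at h3
    rcases hp.2 h3 with h | h
    · exact absurd (inf_eq_left.1 h) hpa
    · exact inf_eq_left.1 h
  exact le_antisymm (key p q hp hpb hpa hqb hqa) (key q p hq hqb hqa hpb hpa)

/-- The labels of a maximal chain from `⊥` to `L` are exactly the sup-irreducible elements
below `L`, each occurring once. -/
theorem labels_nodup_mem {D : Type} [DistribLattice D] [OrderBot D] {L : D} {c l : List D}
    (hc : IsCoverChain L c) (hl : LabelsOf c l) :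
    l.Nodup ∧ ∀ d : D, d ∈ l ↔ SupIrred d ∧ d ≤ L := by
  classical
  obtain ⟨hhead, hlast, hchain⟩ := hc
  obtain ⟨hlen, hlab⟩ := hl
  have hcne : c ≠ [] := by
    intro h; rw [h] at hhead; simp at hhead
  have hcpos : 0 < c.length := List.length_pos_iff.2 hcne
  -- cover steps
  have hstep : ∀ k (h : k + 1 < c.length),
      c.get ⟨k, by omega⟩ ⋖ c.get ⟨k + 1, h⟩ := by
    intro k h
    exact List.isChain_iff_getElem.1 hchain k (by omega)
  -- monotonicity
  have hmono : ∀ i j (hij : i ≤ j) (hj : j < c.length),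
      c.get ⟨i, by omega⟩ ≤ c.get ⟨j, hj⟩ := by
    intro i j hij hj
    induction j with
    | zero =>
      have : i = 0 := Nat.le_zero.1 hij
      subst this; exact le_rfl
    | succ j ih =>
      rcases Nat.lt_succ_iff_lt_or_eq.1 (Nat.lt_succ_of_le hij) with h | h
      · exact le_trans (ih (by omega) (by omega)) (hstep j hj).1.le
      · subst h; exact le_rfl
  have hget0 : c.get ⟨0, hcpos⟩ = ⊥ := by
    have : (c)[0]? = some ⊥ := by rw [← hhead]; cases c <;> rfl
    rw [List.getElem?_eq_getElem hcpos] at this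
    exact Option.some_injective _ this
  have hgetlast : c.get ⟨c.length - 1, by omega⟩ = L := by
    have h := List.getLast?_eq_getElem? (l := c)
    rw [hlast, List.getElem?_eq_getElem (by omega : c.length - 1 < c.length)] at h
    exact (Option.some_injective _ h.symm)
  -- the label data in `get` form
  have hlab' : ∀ k (h : k + 1 < c.length) (hk : k < l.length),
      SupIrred (l.get ⟨k, hk⟩) ∧ l.get ⟨k, hk⟩ ≤ c.get ⟨k + 1, h⟩ ∧
        ¬ l.get ⟨k, hk⟩ ≤ c.get ⟨k, by omega⟩ := by
    intro k h hk
    obtain ⟨p, a, b, hpl, hac, hbc, hpi, hpb, hpa⟩ := hlab k h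
    rw [List.getElem?_eq_getElem hk] at hpl
    rw [List.getElem?_eq_getElem (by omega : k < c.length)] at hac
    rw [List.getElem?_eq_getElem h] at hbc
    obtain rfl : p = l.get ⟨k, hk⟩ := (Option.some_injective _ hpl).symm
    obtain rfl : a = c.get ⟨k, by omega⟩ := (Option.some_injective _ hac).symm
    obtain rfl : b = c.get ⟨k + 1, h⟩ := (Option.some_injective _ hbc).symm
    exact ⟨hpi, hpb, hpa⟩
  have hlc : ∀ k, k < l.length → k + 1 < c.length := by omega
  constructor
  · -- nodup
    have hne : ∀ i j (hi : i < l.length) (hj : j < l.length), i < j →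
        l.get ⟨i, hi⟩ ≠ l.get ⟨j, hj⟩ := by
      intro i j hi hj hlt hij
      obtain ⟨_, hib, _⟩ := hlab' i (hlc i hi) hi
      obtain ⟨_, _, hja⟩ := hlab' j (hlc j hj) hj
      exact hja (hij ▸ le_trans hib (hmono (i + 1) j (by omega) (by omega)))
    rw [List.nodup_iff_injective_get]
    intro ⟨i, hi⟩ ⟨j, hj⟩ hij
    by_contra hcon
    simp only [Fin.mk.injEq] at hcon
    rcases Nat.lt_or_ge i j with h | h
    · exact hne i j hi hj h hij
    · exact hne j i hj hi (by omega) hij.symm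
  · intro d
    constructor
    · -- forward
      intro hd
      obtain ⟨⟨k, hk⟩, rfl⟩ := List.mem_iff_get.1 hd
      obtain ⟨hirr, hkb, _⟩ := hlab' k (hlc k hk) hk
      refine ⟨hirr, le_trans hkb ?_⟩
      calc c.get ⟨k + 1, hlc k hk⟩ ≤ c.get ⟨c.length - 1, by omega⟩ :=
            hmono (k + 1) (c.length - 1) (by omega) (by omega)
        _ = L := hgetlast
    · -- backward
      rintro ⟨hirr, hdL⟩
      have hdbot : d ≠ ⊥ := hirr.ne_bot
      have hex : ∃ k, ∃ h : k < c.length, d ≤ c.get ⟨k, h⟩ :=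
        ⟨c.length - 1, by omega, hgetlast ▸ hdL⟩
      obtain ⟨k₀, ⟨hk₀, hdk₀⟩, hmin⟩ := Nat.lt_wfRel.wf.has_min _ hex
      have hk₀pos : k₀ ≠ 0 := by
        rintro rfl
        exact hdbot (le_bot_iff.1 (hget0 ▸ hdk₀))
      obtain ⟨m, rfl⟩ : ∃ m, k₀ = m + 1 := ⟨k₀ - 1, by omega⟩
      have hm1 : m + 1 < c.length := hk₀
      have hdm : ¬ d ≤ c.get ⟨m, by omega⟩ := by
        intro h
        exact absurd (Nat.lt_succ_self m) (by
          have := hmin m ⟨by omega, h⟩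
          exact this)
      have hml : m < l.length := by omega
      obtain ⟨hpi, hpb, hpa⟩ := hlab' m hm1 hml
      have := label_unique' (hstep m hm1) hpi hpb hpa hirr hdk₀ hdm
      rw [← this]
      exact List.get_mem l ⟨m, hml⟩

/-- In a finite distributive lattice (such as the lattice of regular edge
labelings of a fixed extended dual graph, ordered by flip moves), classify the labels of
cover steps by a map `π` into flippable items.  Then for every element `L` and every two
maximal chains from the minimal element to `L`, each item `x` is flipped the same number of
times along both chains: the flipping number `f_x(L)` is well-defined, independent of the
chosen path. -/
theorem flipping_number_well_defined {D X : Type} [DistribLattice D] [Fintype D]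
    [OrderBot D] [DecidableEq X] (π : D → X) (L : D)
    (c₁ c₂ l₁ l₂ : List D)
    (hc₁ : IsCoverChain L c₁) (hc₂ : IsCoverChain L c₂)
    (hl₁ : LabelsOf c₁ l₁) (hl₂ : LabelsOf c₂ l₂) :
    ∀ x : X, (l₁.map π).count x = (l₂.map π).count x := by
  classical
  obtain ⟨hn₁, hm₁⟩ := labels_nodup_mem hc₁ hl₁
  obtain ⟨hn₂, hm₂⟩ := labels_nodup_mem hc₂ hl₂
  have hperm : l₁.Perm l₂ :=
    (List.perm_ext_iff_of_nodup hn₁ hn₂).2 fun a => (hm₁ a).trans (hm₂ a).symm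
  intro x
  exact (hperm.map π).count_eq x
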